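/- VC-dimension of the cash flow class (Proposition 5.6): Fix t, T with t < T, w with 0 ≤ w ≤ T−t−1, and let f_{t+1},…,f_{t+w+1} be nonnegative real-valued functions on ℝ^m. For s = t+1,…,t+w+1 let 𝓗_s be a class of real-valued functions on ℝ^m with VC-dimension vc(𝓗_s) ≤ d, where d ≥ 1. Consider the cash flow class 𝓖_t = { ϑ_{t+1:w}(f,h) : h_s ∈ 𝓗_s for s = t+1,…,t+w+1 } of functions on (ℝ^m)^{T+1}. Then 𝓖_t is a VC-class and vc(𝓖_t) ≤ c(w)·d, where c(w) = 2(w+2)·log₂(e(w+2)). -/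

import Mathlib

open MeasureTheory Filter

/-- The cash flow function `ϑ_{t:w}(f,h)` along a path `x`:
`ϑ_{t:w}(f,h)(x) = Σ_{s=t}^{t+w} f_s(x_s)·1{f_s(x_s) ≥ h_s(x_s)}·Π_{r=t}^{s−1} 1{f_r(x_r) < h_r(x_r)}
  + h_{t+w}(x_{t+w})·Π_{r=t}^{t+w} 1{f_r(x_r) < h_r(x_r)}`. -/
noncomputable def cashflow {m : ℕ} (f h : ℕ → (Fin m → ℝ) → ℝ) (t w : ℕ)
    (x : ℕ → Fin m → ℝ) : ℝ :=
  (∑ s ∈ Finset.range (w + 1),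
      f (t + s) (x (t + s)) * (if h (t + s) (x (t + s)) ≤ f (t + s) (x (t + s)) then 1 else 0) *
        ∏ r ∈ Finset.range s, (if f (t + r) (x (t + r)) < h (t + r) (x (t + r)) then 1 else 0))
    + h (t + w) (x (t + w)) *
        ∏ r ∈ Finset.range (w + 1), (if f (t + r) (x (t + r)) < h (t + r) (x (t + r)) then 1 else 0)

/-- Extension of a finite path `x ∈ (ℝ^m)^{T+1}` to an `ℕ`-indexed path (by `0` beyond `T`). -/
def pathExt {m T : ℕ} (x : Fin (T + 1) → Fin m → ℝ) : ℕ → Fin m → ℝ :=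
  fun s => if hs : s < T + 1 then x ⟨s, hs⟩ else 0

/-- A class of real-valued functions `𝓖` shatters the points `x 0, …, x (n-1)` if there are
thresholds `r i` such that every boolean pattern of `g (x i) > r i` vs `g (x i) ≤ r i` is
realized by some `g ∈ 𝓖`. -/
def Shatters {S : Type*} (𝓖 : Set (S → ℝ)) {n : ℕ} (x : Fin n → S) : Prop :=
  ∃ r : Fin n → ℝ, ∀ b : Fin n → Bool, ∃ g ∈ 𝓖, ∀ i,
    (b i = true → r i < g (x i)) ∧ (b i = false → g (x i) ≤ r i)

/-- The VC-dimension (pseudo-dimension) of a class of real-valued functions is at most `d`. -/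
def VCDimLE {S : Type*} (𝓖 : Set (S → ℝ)) (d : ℝ) : Prop :=
  ∀ n : ℕ, ∀ x : Fin n → S, Shatters 𝓖 x → (n : ℝ) ≤ d

lemma cashflow_all_continue {m : ℕ} (f h : ℕ → (Fin m → ℝ) → ℝ) (u w : ℕ)
    (z : ℕ → Fin m → ℝ) (hc : ∀ s, s < w → f (u+s) (z (u+s)) < h (u+s) (z (u+s))) :
    cashflow f h u w z =
      if f (u+w) (z (u+w)) < h (u+w) (z (u+w)) then h (u+w) (z (u+w))
      else f (u+w) (z (u+w)) := by
  unfold cashflow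
  rw [Finset.sum_range_succ, Finset.prod_range_succ]
  have hzero : ∀ s ∈ Finset.range w,
      f (u+s) (z (u+s)) * (if h (u+s) (z (u+s)) ≤ f (u+s) (z (u+s)) then (1:ℝ) else 0) *
        ∏ r ∈ Finset.range s, (if f (u+r) (z (u+r)) < h (u+r) (z (u+r)) then (1:ℝ) else 0) = 0 := by
    intro s hs
    rw [if_neg (not_le.2 (hc s (Finset.mem_range.1 hs)))]
    ring
  rw [Finset.sum_eq_zero hzero]
  have hone : ∏ r ∈ Finset.range w,
      (if f (u+r) (z (u+r)) < h (u+r) (z (u+r)) then (1:ℝ) else 0) = 1 :=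
    Finset.prod_eq_one fun r hr => if_pos (hc r (Finset.mem_range.1 hr))
  rw [hone]
  by_cases hcw : f (u+w) (z (u+w)) < h (u+w) (z (u+w))
  · rw [if_pos hcw, if_pos hcw, if_neg (not_le.2 hcw)]; ring
  · rw [if_neg hcw, if_neg hcw, if_pos (not_lt.1 hcw)]; ring

lemma cashflow_stop {m : ℕ} (f h : ℕ → (Fin m → ℝ) → ℝ) (u w s₀ : ℕ)
    (z : ℕ → Fin m → ℝ) (hs₀ : s₀ < w + 1)
    (hc : ∀ s, s < s₀ → f (u+s) (z (u+s)) < h (u+s) (z (u+s)))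
    (hstop : h (u+s₀) (z (u+s₀)) ≤ f (u+s₀) (z (u+s₀))) :
    cashflow f h u w z = f (u+s₀) (z (u+s₀)) := by
  unfold cashflow
  have hprod0 : ∀ s, s₀ < s → ∏ r ∈ Finset.range s,
      (if f (u+r) (z (u+r)) < h (u+r) (z (u+r)) then (1:ℝ) else 0) = 0 := fun s hs =>
    Finset.prod_eq_zero (Finset.mem_range.2 hs) (if_neg (not_lt.2 hstop))
  rw [Finset.sum_eq_single s₀, hprod0 (w+1) hs₀]
  · rw [if_pos hstop,
      Finset.prod_eq_one fun r hr => if_pos (hc r (Finset.mem_range.1 hr))]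
    ring
  · intro s _ hne
    rcases lt_or_gt_of_ne hne with hlt | hgt
    · rw [if_neg (not_le.2 (hc s hlt))]; ring
    · rw [hprod0 s hgt]; ring
  · intro hs; exact absurd (Finset.mem_range.2 hs₀) hs

lemma cashflow_bit_eq {m : ℕ} (f h h' : ℕ → (Fin m → ℝ) → ℝ) (u w : ℕ)
    (z : ℕ → Fin m → ℝ) (ρ : ℝ)
    (hco : ∀ s, s < w →
      (f (u+s) (z (u+s)) < h (u+s) (z (u+s)) ↔ f (u+s) (z (u+s)) < h' (u+s) (z (u+s))))
    (hlast : max (f (u+w) (z (u+w))) ρ < h (u+w) (z (u+w)) ↔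
      max (f (u+w) (z (u+w))) ρ < h' (u+w) (z (u+w))) :
    (ρ < cashflow f h u w z ↔ ρ < cashflow f h' u w z) := by
  by_cases hall : ∀ s, s < w → f (u+s) (z (u+s)) < h (u+s) (z (u+s))
  · have hall' : ∀ s, s < w → f (u+s) (z (u+s)) < h' (u+s) (z (u+s)) :=
      fun s hs => (hco s hs).1 (hall s hs)
    rw [cashflow_all_continue f h u w z hall, cashflow_all_continue f h' u w z hall']
    set F := f (u+w) (z (u+w)) with hF
    set H := h (u+w) (z (u+w)) with hH
    set H' := h' (u+w) (z (u+w)) with hH'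
    have key : ∀ G : ℝ, (ρ < if F < G then G else F) ↔ (ρ < F ∨ max F ρ < G) := by
      intro G
      by_cases hρF : ρ < F
      · simp only [hρF, true_or, iff_true]
        split
        · exact hρF.trans (by assumption)
        · exact hρF
      · simp only [hρF, false_or]
        have hmax : max F ρ = ρ := max_eq_right (not_lt.1 hρF)
        rw [hmax]
        constructor
        · intro hlt
          by_cases hFG : F < G
          · rwa [if_pos hFG] at hlt
          · rw [if_neg hFG] at hlt; exact absurd hlt hρF
        · intro hρG
          have hFG : F < G := lt_of_le_of_lt (not_lt.1 hρF) hρG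
          rwa [if_pos hFG]
    rw [key H, key H', hlast]
  · -- some stop before w
    push_neg at hall
    classical
    have hex : ∃ s, s < w ∧ h (u+s) (z (u+s)) ≤ f (u+s) (z (u+s)) := hall
    set s₀ := Nat.find hex with hs₀def
    obtain ⟨hs₀w, hs₀stop⟩ := Nat.find_spec hex
    have hmin : ∀ s, s < s₀ → f (u+s) (z (u+s)) < h (u+s) (z (u+s)) := by
      intro s hs
      have := Nat.find_min hex hs
      push_neg at this
      exact this (hs.trans hs₀w)
    have hmin' : ∀ s, s < s₀ → f (u+s) (z (u+s)) < h' (u+s) (z (u+s)) :=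
      fun s hs => (hco s (hs.trans hs₀w)).1 (hmin s hs)
    have hstop' : h' (u+s₀) (z (u+s₀)) ≤ f (u+s₀) (z (u+s₀)) := by
      by_contra hc'
      exact absurd ((hco s₀ hs₀w).2 (not_le.1 hc')) (not_lt.2 hs₀stop)
    rw [cashflow_stop f h u w s₀ z (hs₀w.trans (Nat.lt_succ_self w)) hmin hs₀stop,
      cashflow_stop f h' u w s₀ z (hs₀w.trans (Nat.lt_succ_self w)) hmin' hstop']

lemma sum_choose_le_chernoff {n d : ℕ} (hd1 : 1 ≤ d) (hdn : d ≤ n) :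
    ((∑ k ∈ Finset.range (d+1), n.choose k : ℕ) : ℝ) ≤ (Real.exp 1 * ((n:ℝ)/d))^d := by
  have hn0 : 0 < (n:ℝ) := by exact_mod_cast Nat.lt_of_lt_of_le hd1 hdn
  have hd0 : 0 < (d:ℝ) := by exact_mod_cast hd1
  set q : ℝ := (d:ℝ) / n with hq
  have hq0 : 0 < q := by positivity
  have hq1 : q ≤ 1 := by
    rw [hq, div_le_one hn0]; exact_mod_cast hdn
  have hbin : (q + 1)^n = ∑ k ∈ Finset.range (n+1), q^k * (n.choose k : ℝ) := by
    rw [add_pow]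
    exact Finset.sum_congr rfl fun k _ => by rw [one_pow, mul_one]
  have hstep1 : (∑ k ∈ Finset.range (d+1), (n.choose k : ℝ)) * q^d
      ≤ ∑ k ∈ Finset.range (d+1), q^k * (n.choose k : ℝ) := by
    rw [Finset.sum_mul]
    refine Finset.sum_le_sum fun k hk => ?_
    have hkd : k ≤ d := Nat.lt_succ_iff.1 (Finset.mem_range.1 hk)
    have hqdk : q^d ≤ q^k := pow_le_pow_of_le_one hq0.le hq1 hkd
    calc (n.choose k : ℝ) * q^d ≤ (n.choose k : ℝ) * q^k :=
          mul_le_mul_of_nonneg_left hqdk (by positivity)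
      _ = q^k * (n.choose k : ℝ) := mul_comm _ _
  have hstep2 : ∑ k ∈ Finset.range (d+1), q^k * (n.choose k : ℝ)
      ≤ ∑ k ∈ Finset.range (n+1), q^k * (n.choose k : ℝ) :=
    Finset.sum_le_sum_of_subset_of_nonneg
      (Finset.range_subset_range.2 (by omega)) (fun k _ _ => by positivity)
  have hstep3 : (q + 1)^n ≤ Real.exp 1 ^ d := by
    have h1 : (q + 1)^n ≤ (Real.exp q)^n :=
      pow_le_pow_left₀ (by positivity) (Real.add_one_le_exp q) n
    have h2 : (Real.exp q)^n = Real.exp ((n:ℝ) * q) := (Real.exp_nat_mul q n).symm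
    have h3 : (n:ℝ) * q = (d:ℝ) := by rw [hq]; field_simp
    rw [h2, h3] at h1
    rwa [Real.exp_one_pow]
  have hfinal : (∑ k ∈ Finset.range (d+1), (n.choose k : ℝ)) * q^d ≤ Real.exp 1 ^ d :=
    le_trans hstep1 (le_trans hstep2 (by rw [← hbin]; exact hstep3))
  have hqnd : q^d * ((n:ℝ)/d)^d = 1 := by
    rw [← mul_pow]
    have : q * ((n:ℝ)/d) = 1 := by rw [hq]; field_simp
    rw [this, one_pow]
  have hpos : (0:ℝ) < ((n:ℝ)/d)^d := by positivity
  push_cast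
  calc (∑ k ∈ Finset.range (d+1), (n.choose k : ℝ))
      = (∑ k ∈ Finset.range (d+1), (n.choose k : ℝ)) * (q^d * ((n:ℝ)/d)^d) := by
        rw [hqnd, mul_one]
    _ = ((∑ k ∈ Finset.range (d+1), (n.choose k : ℝ)) * q^d) * ((n:ℝ)/d)^d := by ring
    _ ≤ Real.exp 1 ^ d * ((n:ℝ)/d)^d := mul_le_mul_of_nonneg_right hfinal hpos.le
    _ = (Real.exp 1 * ((n:ℝ)/d))^d := (mul_pow _ _ _).symm

lemma u_le_two_L {L u : ℝ} (hL : 1 + 1/Real.log 2 ≤ L)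
    (hupos : 0 < u) (hu : u ≤ L + Real.logb 2 u) : u ≤ 2*L := by
  have hlm1 : (0.6931471803:ℝ) < Real.log 2 := Real.log_two_gt_d9
  have hlm2 : Real.log 2 < 0.6931471808 := Real.log_two_lt_d9
  have he1 : (2.7182818283:ℝ) < Real.exp 1 := Real.exp_one_gt_d9
  have he2 : Real.exp 1 < 2.7182818286 := Real.exp_one_lt_d9
  set lam := Real.log 2 with hlam
  have hlmpos : 0 < lam := by linarith
  have hL2 : 2.4 ≤ L := by
    have : (1:ℝ)/lam ≥ 1/0.6931471808 := by
      apply one_div_le_one_div_of_le <;> linarith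
    have h14 : (1.4:ℝ) ≤ 1/lam := le_trans (by norm_num) this
    linarith
  have hLpos : 0 < L := by linarith
  -- log (2L) ≤ L * lam
  have hlog2L : Real.log (2*L) ≤ L * lam := by
    have hLe : Real.log L ≤ L / Real.exp 1 := by
      have h := Real.log_le_sub_one_of_pos (show 0 < L / Real.exp 1 by positivity)
      rw [Real.log_div (ne_of_gt hLpos) (Real.exp_ne_zero 1), Real.log_exp] at h
      linarith
    have hLe' : Real.exp 1 * Real.log L ≤ L := by
      rw [div_eq_mul_inv] at hLe
      calc Real.exp 1 * Real.log L ≤ Real.exp 1 * (L * (Real.exp 1)⁻¹) := by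
            apply mul_le_mul_of_nonneg_left hLe (Real.exp_pos 1).le
        _ = L := by field_simp
    rw [Real.log_mul (by norm_num) (ne_of_gt hLpos)]
    -- lam + log L ≤ L * lam
    -- from e * log L ≤ L : log L ≤ L / e; want lam + log L ≤ L lam
    -- suffices e*lam + e*log L ≤ e*L*lam i.e. e*lam + L ≤ e*L*lam
    nlinarith [mul_pos hLpos hlmpos, hLe', Real.exp_pos 1]
  -- main computation
  have h1 : (u - L) * lam ≤ Real.log u := by
    have h0 : u - L ≤ Real.log u / lam := by
      have : Real.logb 2 u = Real.log u / lam := rfl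
      linarith [hu, this ▸ hu]
    exact (le_div_iff₀ hlmpos).1 h0
  have hlogu : Real.log u ≤ u/(2*L) - 1 + L * lam := by
    have h := Real.log_le_sub_one_of_pos (show 0 < u/(2*L) by positivity)
    rw [Real.log_div (ne_of_gt hupos) (by positivity)] at h
    linarith [hlog2L]
  have h2 : (u - L) * lam ≤ u/(2*L) - 1 + L * lam := le_trans h1 hlogu
  have h3 : ((u - L) * lam) * (2*L) ≤ (u/(2*L) - 1 + L * lam) * (2*L) :=
    mul_le_mul_of_nonneg_right h2 (by positivity)
  have h4 : u/(2*L) * (2*L) = u := by field_simp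
  have h5 : 1 < 2*L*lam := by nlinarith
  nlinarith [h3, h4, h5]

/-- **VC-dimension of the cash flow class** (Proposition 5.6).
If `vc(𝓗_s) ≤ d` for `s = t+1, …, t+w+1` and the payoffs `f_s` are nonnegative, then the class
`𝓖_t = {ϑ_{t+1:w}(f,h) : h_s ∈ 𝓗_s}` of cash flow functions on `(ℝ^m)^{T+1}` is a VC-class
with `vc(𝓖_t) ≤ c(w)·d`, where `c(w) = 2(w+2)log₂(e(w+2))`. -/
theorem vc_dimension_cashflow_class
    {m : ℕ} (T t w : ℕ) (htT : t < T) (hw : t + w + 1 ≤ T)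
    (f : ℕ → (Fin m → ℝ) → ℝ) (hf : ∀ s x, 0 ≤ f s x)
    (𝓗 : ℕ → Set ((Fin m → ℝ) → ℝ)) (d : ℕ) (hd : 1 ≤ d)
    (h𝓗 : ∀ s, t + 1 ≤ s → s ≤ t + w + 1 → VCDimLE (𝓗 s) d) :
    VCDimLE
      {g : (Fin (T + 1) → Fin m → ℝ) → ℝ | ∃ h : ℕ → (Fin m → ℝ) → ℝ,
        (∀ s, t + 1 ≤ s → s ≤ t + w + 1 → h s ∈ 𝓗 s) ∧
          g = fun x => cashflow f h (t + 1) w (pathExt x)}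
      (2 * (w + 2) * Real.logb 2 (Real.exp 1 * (w + 2)) * d) := by
  classical
  intro n x hsh
  -- basic facts about L
  have hlogtwo : (0:ℝ) < Real.log 2 := Real.log_pos (by norm_num)
  have hL1 : 1 + 1/Real.log 2 ≤ Real.logb 2 (Real.exp 1 * ((w:ℝ)+2)) := by
    have h2e : Real.logb 2 (Real.exp 1 * 2) ≤ Real.logb 2 (Real.exp 1 * ((w:ℝ)+2)) := by
      apply Real.logb_le_logb_of_le (by norm_num : (1:ℝ) < 2) (by positivity)
      have hw2 : (2:ℝ) ≤ (w:ℝ)+2 := by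
        have : (0:ℝ) ≤ (w:ℝ) := Nat.cast_nonneg w
        linarith
      nlinarith [Real.exp_pos 1]
    have heq : Real.logb 2 (Real.exp 1 * 2) = 1/Real.log 2 + 1 := by
      rw [Real.logb_mul (Real.exp_ne_zero 1) (by norm_num),
        Real.logb_self_eq_one (by norm_num)]
      congr 1
      rw [← Real.log_div_log, Real.log_exp, one_div]
    linarith
  have hLpos1 : (1:ℝ) ≤ Real.logb 2 (Real.exp 1 * ((w:ℝ)+2)) := by
    have : (0:ℝ) < 1/Real.log 2 := by positivity
    linarith
  -- trivial case
  by_cases hcase : n ≤ (w+2)*d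
  · have hc : (n:ℝ) ≤ ((w:ℝ)+2)*(d:ℝ) := by exact_mod_cast hcase
    have hd0 : (0:ℝ) < (d:ℝ) := by exact_mod_cast hd
    have hwpos : (0:ℝ) < (w:ℝ)+2 := by positivity
    nlinarith [mul_pos hwpos hd0]
  push_neg at hcase
  -- extract shattering data
  obtain ⟨r, hr⟩ := hsh
  choose g hgS hbits using hr
  simp only [Set.mem_setOf_eq] at hgS
  choose Hb Hmem Hgeq using hgS
  -- points and thresholds
  set y : Fin (w+1) → Fin n → (Fin m → ℝ) :=
    fun s i => pathExt (x i) (t+1+(s:ℕ)) with hy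
  set tt : Fin (w+1) → Fin n → ℝ := fun s i =>
    if (s:ℕ) < w then f (t+1+(s:ℕ)) (y s i)
    else max (f (t+1+(s:ℕ)) (y s i)) (r i) with htt
  set Phi : (Fin n → Bool) → Fin (w+1) → Finset (Fin n) := fun b s =>
    Finset.univ.filter (fun i => tt s i < Hb b (t+1+(s:ℕ)) (y s i)) with hPhi
  have hmemPhi : ∀ b s i, i ∈ Phi b s ↔ tt s i < Hb b (t+1+(s:ℕ)) (y s i) := by
    intro b s i
    rw [hPhi]
    simp
  -- injectivity
  have hPhiInj : Function.Injective Phi := by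
    intro b b' hbb
    funext i
    have hiff : ∀ s : Fin (w+1),
        (tt s i < Hb b (t+1+(s:ℕ)) (y s i) ↔ tt s i < Hb b' (t+1+(s:ℕ)) (y s i)) := by
      intro s
      rw [← hmemPhi b s i, ← hmemPhi b' s i, hbb]
    have key : (r i < cashflow f (Hb b) (t+1) w (pathExt (x i))) ↔
        (r i < cashflow f (Hb b') (t+1) w (pathExt (x i))) := by
      apply cashflow_bit_eq
      · intro s hs
        have h := hiff ⟨s, by omega⟩
        rw [htt] at h
        simpa [hy, if_pos hs] using h
      · have h := hiff ⟨w, by omega⟩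
        rw [htt] at h
        simpa [hy] using h
    have hbit : ∀ b0 : Fin n → Bool,
        (b0 i = true ↔ r i < cashflow f (Hb b0) (t+1) w (pathExt (x i))) := by
      intro b0
      have hgb : g b0 (x i) = cashflow f (Hb b0) (t+1) w (pathExt (x i)) := by
        rw [Hgeq b0]
      constructor
      · intro hbt
        rw [← hgb]
        exact (hbits b0 i).1 hbt
      · intro hlt
        by_contra hne
        have hfalse : b0 i = false := by
          cases hb0 : b0 i
          · rfl
          · exact absurd hb0 hne
        have := (hbits b0 i).2 hfalse
        rw [hgb] at this
        linarith
    have : (b i = true) ↔ (b' i = true) := by rw [hbit b, hbit b', key]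
    cases hb : b i <;> cases hb' : b' i <;> simp_all
  -- counting
  set K := ∑ k ∈ Finset.range (d+1), n.choose k with hK
  set 𝒜 : Fin (w+1) → Finset (Finset (Fin n)) :=
    fun s => Finset.image (fun b => Phi b s) Finset.univ with hA
  have hAcard : ∀ s : Fin (w+1), (𝒜 s).card ≤ K := by
    intro s
    have hsw : (s:ℕ) < w + 1 := s.isLt
    have hstage1 : t + 1 ≤ t + 1 + (s:ℕ) := by omega
    have hstage2 : t + 1 + (s:ℕ) ≤ t + w + 1 := by omega
    have hAd : ∀ A ∈ (𝒜 s).shatterer, A.card ≤ d := by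
      intro A hAmem
      have hshA : (𝒜 s).Shatters A := Finset.mem_shatterer.1 hAmem
      have hvc := h𝓗 (t+1+(s:ℕ)) hstage1 hstage2
      have hcast : ((A.card : ℕ) : ℝ) ≤ (d:ℝ) := by
        apply hvc A.card (fun j => y s ((A.equivFin.symm j : Fin n)))
        refine ⟨fun j => tt s ((A.equivFin.symm j : Fin n)), ?_⟩
        intro b0
        set e : Fin A.card → Fin n := fun j => (A.equivFin.symm j : Fin n) with he
        have heinj : Function.Injective e := by
          intro j j' hjj
          exact A.equivFin.symm.injective (Subtype.ext hjj)
        have hemem : ∀ j, e j ∈ A := fun j => (A.equivFin.symm j).2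
        set tset : Finset (Fin n) :=
          Finset.image e (Finset.univ.filter fun j => b0 j = true) with htset
        have htsub : tset ⊆ A := by
          intro i hi
          obtain ⟨j, _, hj⟩ := Finset.mem_image.1 hi
          exact hj ▸ hemem j
        obtain ⟨uu, huu, huA⟩ := hshA htsub
        obtain ⟨b1, _, hb1⟩ := Finset.mem_image.1 huu
        refine ⟨Hb b1 (t+1+(s:ℕ)), Hmem b1 _ hstage1 hstage2, ?_⟩
        intro j
        constructor
        · intro hb0j
          have hjt : e j ∈ tset :=
            Finset.mem_image_of_mem e (Finset.mem_filter.2 ⟨Finset.mem_univ j, hb0j⟩)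
          have hjint : e j ∈ A ∩ uu := by rw [huA]; exact hjt
          have hju : e j ∈ uu := (Finset.mem_inter.1 hjint).2
          rw [← hb1, hmemPhi] at hju
          exact hju
        · intro hb0j
          by_contra hlt
          push_neg at hlt
          have hju : e j ∈ uu := by
            rw [← hb1, hmemPhi]
            exact hlt
          have hjt : e j ∈ tset := by
            rw [← huA]
            exact Finset.mem_inter.2 ⟨hemem j, hju⟩
          obtain ⟨j', hj', hjj⟩ := Finset.mem_image.1 hjt
          have hjeq : j' = j := heinj hjj
          rw [hjeq] at hj'
          have := (Finset.mem_filter.1 hj').2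
          rw [hb0j] at this
          exact absurd this (by simp)
      exact_mod_cast hcast
    have hsub : (𝒜 s).shatterer ⊆
        (Finset.range (d+1)).biUnion (fun k => Finset.powersetCard k Finset.univ) := by
      intro A hAmem
      exact Finset.mem_biUnion.2 ⟨A.card,
        Finset.mem_range.2 (Nat.lt_succ_of_le (hAd A hAmem)),
        Finset.mem_powersetCard_univ.2 rfl⟩
    calc (𝒜 s).card ≤ (𝒜 s).shatterer.card := Finset.card_le_card_shatterer _
      _ ≤ ((Finset.range (d+1)).biUnion
            (fun k => Finset.powersetCard k Finset.univ)).card := Finset.card_le_card hsub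
      _ ≤ ∑ k ∈ Finset.range (d+1),
            (Finset.powersetCard k (Finset.univ : Finset (Fin n))).card :=
          Finset.card_biUnion_le
      _ = K := by
          rw [hK]
          refine Finset.sum_congr rfl fun k _ => ?_
          rw [Finset.card_powersetCard, Finset.card_univ, Fintype.card_fin]
  have hcount : 2^n ≤ K^(w+1) := by
    have hinj : (Finset.univ : Finset (Fin n → Bool)).card ≤ (Fintype.piFinset 𝒜).card := by
      apply Finset.card_le_card_of_injOn Phi
      · intro b _
        exact Fintype.mem_piFinset.2 fun s => Finset.mem_image_of_mem _ (Finset.mem_univ b)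
      · exact fun b _ b' _ hbb => hPhiInj hbb
    rw [Fintype.card_piFinset] at hinj
    have h2 : (Finset.univ : Finset (Fin n → Bool)).card = 2^n := by
      rw [Finset.card_univ, Fintype.card_fun, Fintype.card_bool, Fintype.card_fin]
    have h3 : ∏ s : Fin (w+1), (𝒜 s).card ≤ ∏ _s : Fin (w+1), K :=
      Finset.prod_le_prod' fun s _ => hAcard s
    have h4 : ∏ _s : Fin (w+1), K = K^(w+1) := by
      rw [Finset.prod_const, Finset.card_univ, Fintype.card_fin]
    omega
  -- numeric endgame
  have hd0 : (0:ℝ) < (d:ℝ) := by exact_mod_cast hd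
  have hdn : d ≤ n := by
    have : d ≤ (w+2)*d := Nat.le_mul_of_pos_left d (by omega)
    omega
  have hn0 : (0:ℝ) < (n:ℝ) := by
    have : 0 < n := by omega
    exact_mod_cast this
  have hKle := sum_choose_le_chernoff hd hdn
  have hcast : (2:ℝ)^n ≤ ((K:ℕ):ℝ)^(w+1) := by exact_mod_cast hcount
  have hKnn : (0:ℝ) ≤ ((K:ℕ):ℝ) := Nat.cast_nonneg K
  have hBpow : ((K:ℕ):ℝ)^(w+1) ≤ ((Real.exp 1 * ((n:ℝ)/d))^d)^(w+1) :=
    pow_le_pow_left₀ hKnn hKle (w+1)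
  set B := Real.exp 1 * ((n:ℝ)/d) with hBdef
  have hB1 : (1:ℝ) ≤ B := by
    have h1 : (1:ℝ) ≤ (n:ℝ)/d := by
      rw [le_div_iff₀ hd0, one_mul]
      exact_mod_cast hdn
    nlinarith [Real.exp_one_gt_d9]
  have h2n : (2:ℝ)^n ≤ B^(d*(w+1)) := by
    rw [pow_mul]
    exact hcast.trans hBpow
  have hlogn : (n:ℝ) ≤ ((d:ℝ)*((w:ℝ)+1)) * Real.logb 2 B := by
    have hmono := Real.logb_le_logb_of_le (show (1:ℝ) < 2 by norm_num)
      (show (0:ℝ) < 2^n by positivity) h2n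
    rw [Real.logb_pow, Real.logb_pow, Real.logb_self_eq_one (by norm_num)] at hmono
    push_cast at hmono
    linarith
  set L := Real.logb 2 (Real.exp 1 * ((w:ℝ)+2)) with hLdef
  set a : ℝ := ((w:ℝ)+2) * (d:ℝ) with hadef
  have hapos : 0 < a := by positivity
  have hlogBnn : 0 ≤ Real.logb 2 B := Real.logb_nonneg (by norm_num) hB1
  have hn2 : (n:ℝ) ≤ a * Real.logb 2 B := by
    have hcoef : (d:ℝ)*((w:ℝ)+1) ≤ a := by
      rw [hadef]
      nlinarith
    calc (n:ℝ) ≤ ((d:ℝ)*((w:ℝ)+1)) * Real.logb 2 B := hlogn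
      _ ≤ a * Real.logb 2 B := mul_le_mul_of_nonneg_right hcoef hlogBnn
  set u : ℝ := (n:ℝ)/a with hudef
  have hupos : 0 < u := by positivity
  have hBsplit : Real.logb 2 B = L + Real.logb 2 u := by
    have hBeq : B = (Real.exp 1 * ((w:ℝ)+2)) * u := by
      rw [hudef, hadef, hBdef]
      field_simp
    rw [hBeq, Real.logb_mul (by positivity) (ne_of_gt hupos), hLdef]
  have hu : u ≤ L + Real.logb 2 u := by
    rw [hudef, div_le_iff₀ hapos]
    calc (n:ℝ) ≤ a * Real.logb 2 B := hn2
      _ = a * (L + Real.logb 2 u) := by rw [hBsplit]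
      _ = (L + Real.logb 2 u) * a := mul_comm _ _
  have hfin : u ≤ 2*L := u_le_two_L hL1 hupos hu
  have hna : (n:ℝ) = u * a := by
    rw [hudef]
    field_simp
  rw [hna]
  calc u * a ≤ (2*L) * a := mul_le_mul_of_nonneg_right hfin hapos.le
    _ = 2 * ((w:ℝ)+2) * L * (d:ℝ) := by rw [hadef]; ring
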